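/- Let K be an open bounded convex body in ℝⁿ containing points p and q, and let b be the intersection of the ray from p through q with the boundary of K. Then the Funk distance d_F(p,q) = log(|p-b|/|q-b|) satisfies the triangle inequality: for any three points p, q, r in K, d_F(p,r) ≤ d_F(p,q) + d_F(q,r). -/

import Mathlib

open scoped Topology

section Aux

variable {E : Type*} [NormedAddCommGroup E] [NormedSpace ℝ E]

/-- Basic facts about the gauge of the translated body, and the frontier point on the ray. -/
lemma funk_aux {K : Set E} (hKopen : IsOpen K) (hKconv : Convex ℝ K)
    (hKbdd : Bornology.IsBounded K) {p q : E} (hp : p ∈ K) (hq : q ∈ K) (hpq : p ≠ q) :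
    0 < gauge ((· + p) ⁻¹' K) (q - p) ∧ gauge ((· + p) ⁻¹' K) (q - p) < 1 ∧
      p + (gauge ((· + p) ⁻¹' K) (q - p))⁻¹ • (q - p) ∈ frontier K := by
  set s : Set E := (· + p) ⁻¹' K with hs
  have h0 : (0 : E) ∈ s := by simp [hs, hp]
  have hso : IsOpen s := hKopen.preimage (continuous_add_right p)
  have hsc : Convex ℝ s := hKconv.translate_preimage_left p
  have hnhds : s ∈ 𝓝 (0 : E) := hso.mem_nhds h0
  have habs : Absorbent ℝ s := absorbent_nhds_zero hnhds
  have hvnb : Bornology.IsVonNBounded ℝ s := by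
    rw [NormedSpace.isVonNBounded_iff]
    obtain ⟨C, hC⟩ := isBounded_iff_forall_norm_le.1 hKbdd
    refine isBounded_iff_forall_norm_le.2 ⟨C + ‖p‖, fun x hx => ?_⟩
    have : ‖x + p‖ ≤ C := hC _ hx
    calc ‖x‖ = ‖(x + p) + (-p)‖ := by rw [add_neg_cancel_right]
      _ ≤ ‖x + p‖ + ‖-p‖ := norm_add_le _ _
      _ ≤ C + ‖p‖ := by rw [norm_neg]; linarith
  have hmem : q - p ∈ s := by simp [hs, hq]
  have hg1 : gauge s (q - p) < 1 := gauge_lt_one_of_mem_of_isOpen hso hmem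
  have hg0 : 0 < gauge s (q - p) := (gauge_pos habs hvnb).2 (sub_ne_zero.2 hpq.symm)
  refine ⟨hg0, hg1, ?_⟩
  have hone : gauge s ((gauge s (q - p))⁻¹ • (q - p)) = 1 := by
    rw [gauge_smul_of_nonneg (inv_nonneg.2 hg0.le), smul_eq_mul, inv_mul_cancel₀ hg0.ne']
  have hfr : (gauge s (q - p))⁻¹ • (q - p) ∈ frontier s :=
    (gauge_eq_one_iff_mem_frontier hsc hnhds).1 hone
  have hfr' : frontier s = (· + p) ⁻¹' frontier K :=
    ((Homeomorph.addRight p).preimage_frontier K).symm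
  rw [hfr'] at hfr
  have : (gauge s (q - p))⁻¹ • (q - p) + p ∈ frontier K := hfr
  rwa [add_comm] at this

/-- The Funk distance equals `-log (1 - gauge)`. -/
lemma funk_formula {K : Set E} (hKopen : IsOpen K) (hKconv : Convex ℝ K)
    (hKbdd : Bornology.IsBounded K) {dF : E → E → ℝ}
    (hdef : ∀ p ∈ K, ∀ q ∈ K, p ≠ q →
      ∀ b ∈ frontier K, ∀ t : ℝ, 1 ≤ t → b = p + t • (q - p) →
        dF p q = Real.log (‖p - b‖ / ‖q - b‖))
    {p q : E} (hp : p ∈ K) (hq : q ∈ K) (hpq : p ≠ q) :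
    dF p q = -Real.log (1 - gauge ((· + p) ⁻¹' K) (q - p)) := by
  obtain ⟨hg0, hg1, hfr⟩ := funk_aux hKopen hKconv hKbdd hp hq hpq
  set g : ℝ := gauge ((· + p) ⁻¹' K) (q - p) with hgdef
  have hginv : 0 < g⁻¹ := inv_pos.2 hg0
  have hgmul : g * g⁻¹ = 1 := mul_inv_cancel₀ hg0.ne'
  have ht : 1 ≤ g⁻¹ := by nlinarith
  have hb := hdef p hp q hq hpq _ hfr g⁻¹ ht rfl
  have hN : (0 : ℝ) < ‖q - p‖ := norm_pos_iff.2 (sub_ne_zero.2 hpq.symm)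
  have h1 : ‖p - (p + g⁻¹ • (q - p))‖ = g⁻¹ * ‖q - p‖ := by
    have : p - (p + g⁻¹ • (q - p)) = (-g⁻¹) • (q - p) := by module
    rw [this, norm_smul, Real.norm_eq_abs, abs_neg, abs_of_pos hginv]
  have h2 : ‖q - (p + g⁻¹ • (q - p))‖ = (g⁻¹ - 1) * ‖q - p‖ := by
    have : q - (p + g⁻¹ • (q - p)) = (1 - g⁻¹) • (q - p) := by module
    rw [this, norm_smul, Real.norm_eq_abs, abs_of_nonpos (by linarith), neg_sub]
  rw [h1, h2] at hb
  have hratio : g⁻¹ * ‖q - p‖ / ((g⁻¹ - 1) * ‖q - p‖) = (1 - g)⁻¹ := by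
    have hne : g⁻¹ - 1 ≠ 0 := by nlinarith
    have h1g : 1 - g ≠ 0 := by linarith
    field_simp
  rw [hb, hratio, Real.log_inv]

/-- Nonnegativity of the Funk distance. -/
lemma funk_nonneg {K : Set E} (hKopen : IsOpen K) (hKconv : Convex ℝ K)
    (hKbdd : Bornology.IsBounded K) {dF : E → E → ℝ}
    (hdef : ∀ p ∈ K, ∀ q ∈ K, p ≠ q →
      ∀ b ∈ frontier K, ∀ t : ℝ, 1 ≤ t → b = p + t • (q - p) →
        dF p q = Real.log (‖p - b‖ / ‖q - b‖))
    {p q : E} (hp : p ∈ K) (hq : q ∈ K) (hpq : p ≠ q) : 0 ≤ dF p q := by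
  obtain ⟨hg0, hg1, -⟩ := funk_aux hKopen hKconv hKbdd hp hq hpq
  rw [funk_formula hKopen hKconv hKbdd hdef hp hq hpq]
  have : Real.log (1 - gauge ((· + p) ⁻¹' K) (q - p)) ≤ 0 :=
    Real.log_nonpos (by linarith) (by linarith)
  linarith

end Aux

/-- The Funk distance on a bounded open convex body satisfies
the triangle inequality. `dF` is characterized by: `dF p p = 0`, and for
`p ≠ q`, `dF p q = log (‖p - b‖ / ‖q - b‖)` where `b` is the point where the
ray from `p` through `q` meets the boundary of `K`. -/
theorem funk_triangle_inequality {n : ℕ}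
    (K : Set (EuclideanSpace ℝ (Fin n)))
    (hKopen : IsOpen K) (hKconv : Convex ℝ K) (hKbdd : Bornology.IsBounded K)
    (dF : EuclideanSpace ℝ (Fin n) → EuclideanSpace ℝ (Fin n) → ℝ)
    (hdiag : ∀ p ∈ K, dF p p = 0)
    (hdef : ∀ p ∈ K, ∀ q ∈ K, p ≠ q →
      ∀ b ∈ frontier K, ∀ t : ℝ, 1 ≤ t → b = p + t • (q - p) →
        dF p q = Real.log (‖p - b‖ / ‖q - b‖)) :
    ∀ p ∈ K, ∀ q ∈ K, ∀ r ∈ K, dF p r ≤ dF p q + dF q r := by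
  intro p hp q hq r hr
  by_cases hpq : p = q
  · subst hpq; rw [hdiag p hp, zero_add]
  by_cases hqr : q = r
  · subst hqr; rw [hdiag q hq, add_zero]
  by_cases hpr : p = r
  · subst hpr
    rw [hdiag p hp]
    have h1 := funk_nonneg hKopen hKconv hKbdd hdef hp hq hpq
    have h2 := funk_nonneg hKopen hKconv hKbdd hdef hq hp (Ne.symm hpq)
    linarith
  -- main case: p, q, r pairwise distinct
  set sp : Set (EuclideanSpace ℝ (Fin n)) := (· + p) ⁻¹' K with hsp
  set sq : Set (EuclideanSpace ℝ (Fin n)) := (· + q) ⁻¹' K with hsq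
  obtain ⟨hα0, hα1, hbfr⟩ := funk_aux hKopen hKconv hKbdd hp hq hpq
  obtain ⟨hβ0, hβ1, hcfr⟩ := funk_aux hKopen hKconv hKbdd hq hr hqr
  obtain ⟨hγ0, hγ1, -⟩ := funk_aux hKopen hKconv hKbdd hp hr hpr
  set α : ℝ := gauge sp (q - p) with hαdef
  set β : ℝ := gauge sq (r - q) with hβdef
  set γ : ℝ := gauge sp (r - p) with hγdef
  -- facts about sp
  have h0 : (0 : EuclideanSpace ℝ (Fin n)) ∈ sp := by simp [hsp, hp]
  have hso : IsOpen sp := hKopen.preimage (continuous_add_right p)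
  have hsc : Convex ℝ sp := hKconv.translate_preimage_left p
  have hnhds : sp ∈ 𝓝 (0 : EuclideanSpace ℝ (Fin n)) := hso.mem_nhds h0
  -- the two boundary points, as elements of closure sp
  have hclsp : closure sp = (· + p) ⁻¹' closure K :=
    ((Homeomorph.addRight p).preimage_closure K).symm
  have hb : α⁻¹ • (q - p) ∈ closure sp := by
    rw [hclsp]
    have : α⁻¹ • (q - p) + p = p + α⁻¹ • (q - p) := add_comm _ _
    show α⁻¹ • (q - p) + p ∈ closure K
    rw [this]
    exact frontier_subset_closure hbfr
  have hc : (q + β⁻¹ • (r - q)) - p ∈ closure sp := by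
    rw [hclsp]
    show (q + β⁻¹ • (r - q)) - p + p ∈ closure K
    rw [sub_add_cancel]
    exact frontier_subset_closure hcfr
  -- the key gauge inequality
  set σ : ℝ := α + β - α * β with hσdef
  have hσ0 : 0 < σ := by nlinarith
  have hσ1 : σ < 1 := by nlinarith
  have hw1 : 0 ≤ α * (1 - β) / σ :=
    div_nonneg (mul_nonneg hα0.le (by linarith)) hσ0.le
  have hw2 : 0 ≤ β / σ := by positivity
  have hwsum : α * (1 - β) / σ + β / σ = 1 := by
    field_simp
    ring
  have hcomb : (α * (1 - β) / σ) • (α⁻¹ • (q - p)) + (β / σ) • ((q + β⁻¹ • (r - q)) - p)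
      ∈ closure sp := hsc.closure hb hc hw1 hw2 hwsum
  have hid : (α * (1 - β) / σ) • (α⁻¹ • (q - p)) + (β / σ) • ((q + β⁻¹ • (r - q)) - p)
      = σ⁻¹ • (r - p) := by
    have hα : α ≠ 0 := hα0.ne'
    have hβ : β ≠ 0 := hβ0.ne'
    have hσ : σ ≠ 0 := hσ0.ne'
    match_scalars <;> field_simp <;> ring
  rw [hid] at hcomb
  have hle : gauge sp (σ⁻¹ • (r - p)) ≤ 1 :=
    (gauge_le_one_iff_mem_closure hsc hnhds).2 hcomb
  rw [gauge_smul_of_nonneg (inv_nonneg.2 hσ0.le), smul_eq_mul, ← hγdef] at hle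
  have hγσ : γ ≤ σ := by
    have h2 := mul_le_mul_of_nonneg_left hle hσ0.le
    rwa [mul_one, ← mul_assoc, mul_inv_cancel₀ hσ0.ne', one_mul] at h2
  -- conclude
  rw [funk_formula hKopen hKconv hKbdd hdef hp hr hpr,
    funk_formula hKopen hKconv hKbdd hdef hp hq hpq,
    funk_formula hKopen hKconv hKbdd hdef hq hr hqr, ← hαdef, ← hβdef, ← hγdef]
  have hprod : 0 < (1 - α) * (1 - β) := mul_pos (by linarith) (by linarith)
  have hkey : (1 - α) * (1 - β) ≤ 1 - γ := by nlinarith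
  have hlog : Real.log ((1 - α) * (1 - β)) ≤ Real.log (1 - γ) :=
    Real.log_le_log hprod hkey
  rw [Real.log_mul (by linarith) (by linarith)] at hlog
  linarith
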